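/- (Consistency bound for the Crank–Nicolson scheme.) Let H be a real Hilbert space, let a < b be real numbers and τ = b − a. Let u : [a, b] → H be three times continuously differentiable (derivatives in the norm sense). Then ‖(u(b) − u(a))/τ − (1/2)·(u′(b) + u′(a))‖² ≤ (τ³/4) · ∫_a^b ‖u‴(s)‖² ds. -/

import Mathlib

open MeasureTheory

theorem crank_nicolson_consistency_bound
    {H : Type*} [NormedAddCommGroup H] [InnerProductSpace ℝ H] [CompleteSpace H]
    (a b : ℝ) (hab : a < b) (τ : ℝ) (hτ : τ = b - a)
    (u u' u'' u''' : ℝ → H)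
    (hu' : ∀ t ∈ Set.Icc a b, HasDerivWithinAt u (u' t) (Set.Icc a b) t)
    (hu'' : ∀ t ∈ Set.Icc a b, HasDerivWithinAt u' (u'' t) (Set.Icc a b) t)
    (hu''' : ∀ t ∈ Set.Icc a b, HasDerivWithinAt u'' (u''' t) (Set.Icc a b) t)
    (hu'''_cont : ContinuousOn u''' (Set.Icc a b)) :
    ‖(1 / τ) • (u b - u a) - (1/2 : ℝ) • (u' b + u' a)‖^2 ≤
      (τ^3 / 4) * ∫ s in a..b, ‖u''' s‖^2 := by
  have hab' : a ≤ b := hab.le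
  have hτ0 : 0 < τ := by rw [hτ]; linarith
  have huIcc : Set.uIcc a b = Set.Icc a b := Set.uIcc_of_le hab'
  -- the antiderivative
  set F : ℝ → H := fun t =>
    ((t - a) * (t - b)) • u'' t - (2*t - a - b) • u' t + (2:ℝ) • u t with hFdef
  have hu_cont : ContinuousOn u (Set.Icc a b) := fun t ht =>
    (hu' t ht).continuousWithinAt
  have hu'_cont : ContinuousOn u' (Set.Icc a b) := fun t ht =>
    (hu'' t ht).continuousWithinAt
  have hu''_cont : ContinuousOn u'' (Set.Icc a b) := fun t ht =>
    (hu''' t ht).continuousWithinAt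
  have hgc : Continuous fun s : ℝ => (s - a) * (s - b) :=
    (continuous_id.sub continuous_const).mul (continuous_id.sub continuous_const)
  have hlc : Continuous fun s : ℝ => 2*s - a - b :=
    ((continuous_const.mul continuous_id).sub continuous_const).sub continuous_const
  have hFcont : ContinuousOn F (Set.Icc a b) := by
    apply ContinuousOn.add
    · apply ContinuousOn.sub
      · exact hgc.continuousOn.smul hu''_cont
      · exact hlc.continuousOn.smul hu'_cont
    · exact continuousOn_const.smul hu_cont
  have hFderiv : ∀ t ∈ Set.Ioo a b,
      HasDerivAt F (((t - a) * (t - b)) • u''' t) t := by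
    intro t ht
    have hmem : Set.Icc a b ∈ nhds t := Icc_mem_nhds ht.1 ht.2
    have ht' : t ∈ Set.Icc a b := Set.Ioo_subset_Icc_self ht
    have h1 : HasDerivAt u (u' t) t := (hu' t ht').hasDerivAt hmem
    have h2 : HasDerivAt u' (u'' t) t := (hu'' t ht').hasDerivAt hmem
    have h3 : HasDerivAt u'' (u''' t) t := (hu''' t ht').hasDerivAt hmem
    have hg : HasDerivAt (fun s : ℝ => (s - a) * (s - b)) (2*t - a - b) t := by
      have := ((hasDerivAt_id t).sub_const a).mul ((hasDerivAt_id t).sub_const b)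
      refine this.congr_deriv ?_
      simp only [id_eq]; ring
    have hl : HasDerivAt (fun s : ℝ => 2*s - a - b) 2 t := by
      have := (((hasDerivAt_id t).const_mul 2).sub_const a).sub_const b
      refine this.congr_deriv ?_
      simp [id_eq]
    have hA := hg.smul h3
    have hB := hl.smul h2
    have hC := h1.const_smul (2:ℝ)
    have := (hA.sub hB).add hC
    refine this.congr_deriv ?_
    module
  have hint : IntervalIntegrable (fun s => ((s - a) * (s - b)) • u''' s)
      volume a b := by
    apply ContinuousOn.intervalIntegrable
    rw [huIcc]
    exact hgc.continuousOn.smul hu'''_cont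
  have key : (∫ s in a..b, ((s - a) * (s - b)) • u''' s) = F b - F a :=
    intervalIntegral.integral_eq_sub_of_hasDeriv_right_of_le hab' hFcont
      (fun t ht => (hFderiv t ht).hasDerivWithinAt) hint
  have hFba : F b - F a = (2:ℝ) • (u b - u a) - τ • (u' b + u' a) := by
    have e1 : F b = ((b - a) * (b - b)) • u'' b - (2*b - a - b) • u' b + (2:ℝ) • u b := rfl
    have e2 : F a = ((a - a) * (a - b)) • u'' a - (2*a - a - b) • u' a + (2:ℝ) • u a := rfl
    rw [e1, e2, hτ]
    module
  -- the error representation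
  have hE : (1 / τ) • (u b - u a) - (1/2 : ℝ) • (u' b + u' a)
      = (1 / (2*τ)) • ∫ s in a..b, ((s - a) * (s - b)) • u''' s := by
    rw [key, hFba]
    have hτne : τ ≠ 0 := hτ0.ne'
    match_scalars <;> (field_simp; try ring)
  set I : ℝ := ∫ s in a..b, ‖u''' s‖ with hI
  set J : ℝ := ∫ s in a..b, ‖u''' s‖^2 with hJ
  have hf_cont : ContinuousOn (fun s => ‖u''' s‖) (Set.Icc a b) := hu'''_cont.norm
  have hf_int : IntervalIntegrable (fun s => ‖u''' s‖) volume a b :=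
    (huIcc ▸ hf_cont).intervalIntegrable
  have hf2_int : IntervalIntegrable (fun s => ‖u''' s‖^2) volume a b :=
    (huIcc ▸ (hf_cont.pow 2)).intervalIntegrable
  have hI0 : 0 ≤ I := intervalIntegral.integral_nonneg hab' (fun s _ => norm_nonneg _)
  have hJ0 : 0 ≤ J := intervalIntegral.integral_nonneg hab' (fun s _ => sq_nonneg _)
  -- Cauchy–Schwarz: I^2 ≤ τ * J
  have hCS : I^2 ≤ τ * J := by
    have h0 : 0 ≤ ∫ s in a..b, (‖u''' s‖ - I/τ)^2 :=
      intervalIntegral.integral_nonneg hab' (fun s _ => sq_nonneg _)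
    have hexp : (∫ s in a..b, (‖u''' s‖ - I/τ)^2)
        = J - 2*(I/τ)*I + (I/τ)^2 * τ := by
      have heq : ∀ s : ℝ, (‖u''' s‖ - I/τ)^2
          = ‖u''' s‖^2 - 2*(I/τ)*‖u''' s‖ + (I/τ)^2 := by intro s; ring
      simp only [heq]
      rw [intervalIntegral.integral_add ((hf2_int.sub (hf_int.const_mul _)))
          intervalIntegrable_const,
        intervalIntegral.integral_sub hf2_int (hf_int.const_mul _),
        intervalIntegral.integral_const_mul, intervalIntegral.integral_const,
        smul_eq_mul]
      rw [hτ]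
      ring
    rw [hexp] at h0
    have h0' := mul_le_mul_of_nonneg_left h0 hτ0.le
    have hid : τ * (J - 2*(I/τ)*I + (I/τ)^2 * τ) = τ * J - I^2 := by
      field_simp
      ring
    rw [mul_zero, hid] at h0'
    linarith
  -- pointwise bound on the weight
  have hnorm_bound : ‖(1 / τ) • (u b - u a) - (1/2 : ℝ) • (u' b + u' a)‖
      ≤ (1/(2*τ)) * ((τ^2/4) * I) := by
    rw [hE, norm_smul]
    have h1 : ‖(1/(2*τ) : ℝ)‖ = 1/(2*τ) := by
      rw [Real.norm_eq_abs, abs_of_pos]; positivity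
    rw [h1]
    apply mul_le_mul_of_nonneg_left _ (by positivity)
    calc ‖∫ s in a..b, ((s - a) * (s - b)) • u''' s‖
        ≤ ∫ s in a..b, ‖((s - a) * (s - b)) • u''' s‖ :=
          intervalIntegral.norm_integral_le_integral_norm hab'
      _ ≤ ∫ s in a..b, (τ^2/4) * ‖u''' s‖ := by
          apply intervalIntegral.integral_mono_on hab' _ (hf_int.const_mul _)
          · intro s hs
            rw [norm_smul, Real.norm_eq_abs]
            apply mul_le_mul_of_nonneg_right _ (norm_nonneg _)
            rw [abs_mul]
            have hs1 := hs.1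
            have hs2 := hs.2
            rw [abs_of_nonneg (by linarith : (0:ℝ) ≤ s - a),
              abs_of_nonpos (by linarith : s - b ≤ 0), hτ]
            nlinarith [sq_nonneg (a + b - 2*s)]
          · apply ContinuousOn.intervalIntegrable
            rw [huIcc]
            exact (hgc.continuousOn.smul hu'''_cont).norm
      _ = (τ^2/4) * I := intervalIntegral.integral_const_mul _ _
  have hbound : (1/(2*τ)) * ((τ^2/4) * I) = (τ/8) * I := by field_simp; ring
  rw [hbound] at hnorm_bound
  have hnn : (0:ℝ) ≤ (τ/8) * I := by positivity
  have hsq := pow_le_pow_left₀ (norm_nonneg _) hnorm_bound 2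
  calc ‖(1 / τ) • (u b - u a) - (1/2 : ℝ) • (u' b + u' a)‖^2
      ≤ ((τ/8) * I)^2 := hsq
    _ = (τ^2/64) * I^2 := by ring
    _ ≤ (τ^2/64) * (τ * J) := by
        apply mul_le_mul_of_nonneg_left hCS (by positivity)
    _ ≤ (τ^3/4) * J := by nlinarith [mul_nonneg (pow_nonneg hτ0.le 3) hJ0]
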